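/- For any coprime integers m₁, m₂ with m₁ even and m₂ odd, there exists a matrix [[a,b],[c,d]] in Γ(2) with b = m₁ and d = m₂. -/
import Mathlib

/-- For any coprime integers `m₁, m₂` with `m₁` even and `m₂` odd, there is a matrix
`[[a,b],[c,d]] ∈ Γ(2)` with `b = m₁` and `d = m₂`. -/
theorem Gamma2_realizes_even_odd_coprime_pair (m₁ m₂ : ℤ)
    (h₁ : Even m₁) (h₂ : Odd m₂) (hcop : IsCoprime m₁ m₂) :
    ∃ a b c d : ℤ, a * d - b * c = 1 ∧ Odd a ∧ Odd d ∧ Even b ∧ Even c ∧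
      b = m₁ ∧ d = m₂ := by
  obtain ⟨u, v, h⟩ := hcop
  obtain ⟨k, hk⟩ := h₁
  obtain ⟨l, hl⟩ := h₂
  have hv : Odd v := by
    have hvm : Odd (v * m₂) := ⟨-(u * k), by rw [hk] at h; linear_combination h⟩
    exact (Int.odd_mul.mp hvm).1
  refine ⟨v + u * m₁, m₁, u * (m₂ - 1), m₂, by linear_combination h, ?_, ⟨l, hl⟩, ⟨k, hk⟩,
    ⟨u * l, by rw [hl]; ring⟩, rfl, rfl⟩
  exact hv.add_even ⟨u * k, by rw [hk]; ring⟩
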